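/- Assume C₃ h > 1, and let r : C([−h,0];H) → [0,h] be the map assigning to each φ the unique ρ ∈ [0,h] with R(ρ;φ) = 1. Then r is Fréchet differentiable at every φ ∈ C([−h,0];H), and its derivative is the continuous linear functional Dr(φ) given by Dr(φ)ψ = ( C₁/(C₂ + ‖φ(−r(φ))‖²) + C₃ )^{−1} · ∫_{−r(φ)}^{0} ( 2 C₁ ⟨φ(s), ψ(s)⟩ / (C₂ + ‖φ(s)‖²)² ) ds for ψ ∈ C([−h,0];H). -/

import Mathlib

open Set intervalIntegral MeasureTheory


lemma glip {H : Type*} [NormedAddCommGroup H] (C₁ C₂ : ℝ) (hC₁ : 0 < C₁) (hC₂ : 0 < C₂)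
    (x y : H) :
    |C₁ / (C₂ + ‖x‖ ^ 2) - C₁ / (C₂ + ‖y‖ ^ 2)| ≤ C₁ / (C₂ * Real.sqrt C₂) * ‖x - y‖ := by
  set a := ‖x‖ with ha'
  set b := ‖y‖ with hb'
  set d := ‖x - y‖ with hd'
  have ha : 0 ≤ a := norm_nonneg x
  have hb : 0 ≤ b := norm_nonneg y
  have hd : 0 ≤ d := norm_nonneg _
  have habd : |a - b| ≤ d := abs_norm_sub_norm_le x y
  set s := Real.sqrt C₂ with hs
  have hs2 : s ^ 2 = C₂ := Real.sq_sqrt hC₂.le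
  have hs0 : 0 < s := Real.sqrt_pos.2 hC₂
  have h1 : 0 < C₂ + a ^ 2 := by positivity
  have h2 : 0 < C₂ + b ^ 2 := by positivity
  have key : C₁ / (C₂ + a ^ 2) - C₁ / (C₂ + b ^ 2)
      = C₁ * (b ^ 2 - a ^ 2) / ((C₂ + a ^ 2) * (C₂ + b ^ 2)) := by
    field_simp; ring
  rw [key, abs_div, abs_mul, abs_of_pos (by positivity : (0:ℝ) < (C₂ + a ^ 2) * (C₂ + b ^ 2)),
    abs_of_pos hC₁, div_le_iff₀ (by positivity)]
  have hba : |b ^ 2 - a ^ 2| ≤ (a + b) * d := by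
    have h3 : b ^ 2 - a ^ 2 = (b + a) * (b - a) := by ring
    rw [h3, abs_mul, abs_of_nonneg (by linarith)]
    have : |b - a| ≤ d := by rw [abs_sub_comm]; exact habd
    nlinarith
  have h3 : (a + b) * (C₂ * s) ≤ (C₂ + a ^ 2) * (C₂ + b ^ 2) := by
    nlinarith [sq_nonneg (a - s), sq_nonneg (b - s), sq_nonneg (a*b - s*s), mul_nonneg ha hb]
  have h4 : C₁ * |b ^ 2 - a ^ 2| ≤ C₁ * ((a + b) * d) := by nlinarith
  calc C₁ * |b ^ 2 - a ^ 2| ≤ C₁ * ((a + b) * d) := h4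
    _ = C₁ / (C₂ * s) * ((a + b) * (C₂ * s)) * d := by field_simp
    _ ≤ C₁ / (C₂ * s) * ((C₂ + a ^ 2) * (C₂ + b ^ 2)) * d := by
        have := mul_le_mul_of_nonneg_left h3 (by positivity : (0:ℝ) ≤ C₁ / (C₂ * s))
        nlinarith [this]
    _ = C₁ / (C₂ * s) * d * ((C₂ + a ^ 2) * (C₂ + b ^ 2)) := by ring

lemma gquad {H : Type*} [NormedAddCommGroup H] [InnerProductSpace ℝ H]
    (C₁ C₂ B : ℝ) (hC₁ : 0 < C₁) (hC₂ : 0 < C₂) (x v : H) (hx : ‖x‖ ≤ B) (hv : ‖v‖ ≤ 1) :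
    |C₁ / (C₂ + ‖x + v‖ ^ 2) - C₁ / (C₂ + ‖x‖ ^ 2)
        + 2 * C₁ * (inner ℝ x v : ℝ) / (C₂ + ‖x‖ ^ 2) ^ 2|
      ≤ C₁ * ((4 * B ^ 2 + 2 * B) / C₂ ^ 3 + 1 / C₂ ^ 2) * ‖v‖ ^ 2 := by
  set p := (inner ℝ x v : ℝ) with hp'
  set n := ‖v‖ with hn'
  set q := C₂ + ‖x‖ ^ 2 with hq'
  have hn : 0 ≤ n := norm_nonneg v
  have hB : 0 ≤ B := le_trans (norm_nonneg x) hx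
  have hq : C₂ ≤ q := by rw [hq']; exact le_add_of_nonneg_right (by positivity)
  have hq0 : 0 < q := lt_of_lt_of_le hC₂ hq
  have hsq : ‖x + v‖ ^ 2 = q + 2 * p + n ^ 2 - C₂ := by
    rw [norm_add_sq_real]; simp [hq', hp', hn']; ring
  have hq'' : C₂ + ‖x + v‖ ^ 2 = q + 2 * p + n ^ 2 := by rw [hsq]; ring
  set Q := q + 2 * p + n ^ 2 with hQ'
  have hQ : C₂ ≤ Q := by
    have : C₂ ≤ C₂ + ‖x + v‖ ^ 2 := le_add_of_nonneg_right (by positivity)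
    rwa [hq''] at this
  have hQ0 : 0 < Q := lt_of_lt_of_le hC₂ hQ
  clear_value Q q n p
  have hpB : |p| ≤ B * n := by
    rw [hp', hn']
    exact le_trans (abs_real_inner_le_norm x v)
      (mul_le_mul_of_nonneg_right hx (norm_nonneg v))
  have key : C₁ / (C₂ + ‖x + v‖ ^ 2) - C₁ / q + 2 * C₁ * p / q ^ 2
      = C₁ * (2 * p * (2 * p + n ^ 2) - n ^ 2 * q) / (q ^ 2 * Q) := by
    rw [hq'', hQ']
    have hne : q + 2 * p + n ^ 2 ≠ 0 := by rw [← hQ']; exact hQ0.ne'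
    field_simp
    ring
  rw [key, abs_div, abs_mul, abs_of_pos hC₁,
    abs_of_pos (by positivity : (0:ℝ) < q ^ 2 * Q), div_le_iff₀ (by positivity)]
  have hnum : |2 * p * (2 * p + n ^ 2) - n ^ 2 * q|
      ≤ (4 * B ^ 2 + 2 * B) * n ^ 2 + n ^ 2 * q := by
    calc |2 * p * (2 * p + n ^ 2) - n ^ 2 * q|
        ≤ |2 * p * (2 * p + n ^ 2)| + |n ^ 2 * q| := abs_sub _ _
      _ ≤ (4 * B ^ 2 + 2 * B) * n ^ 2 + n ^ 2 * q := by
          have h1 : |2 * p * (2 * p + n ^ 2)| ≤ (4 * B ^ 2 + 2 * B) * n ^ 2 := by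
            rw [abs_mul]
            have e1 : |2 * p| ≤ 2 * (B * n) := by rw [abs_mul]; simp; nlinarith [hpB]
            have e2 : |2 * p + n ^ 2| ≤ 2 * (B * n) + n ^ 2 := by
              calc |2 * p + n ^ 2| ≤ |2 * p| + |n ^ 2| := abs_add_le _ _
                _ ≤ 2 * (B * n) + n ^ 2 := by rw [abs_of_nonneg (by positivity : (0:ℝ) ≤ n ^2)]; linarith
            have h6 := mul_le_mul e1 e2 (abs_nonneg _) (by positivity)
            have h7 : B * n ^ 2 * n ≤ B * n ^ 2 * 1 :=
              mul_le_mul_of_nonneg_left hv (by positivity)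
            nlinarith [h6, h7, mul_nonneg hB hn, sq_nonneg n]
          have h2 : |n ^ 2 * q| = n ^ 2 * q := abs_of_nonneg (by positivity)
          linarith
  calc C₁ * |2 * p * (2 * p + n ^ 2) - n ^ 2 * q|
      ≤ C₁ * ((4 * B ^ 2 + 2 * B) * n ^ 2 + n ^ 2 * q) :=
        mul_le_mul_of_nonneg_left hnum hC₁.le
    _ ≤ C₁ * ((4 * B ^ 2 + 2 * B) / C₂ ^ 3 + 1 / C₂ ^ 2) * n ^ 2 * (q ^ 2 * Q) := by
        have hqq : C₂ * C₂ ≤ q * q := mul_le_mul hq hq hC₂.le hq0.le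
        have hc3 : C₂ ^ 3 ≤ q ^ 2 * Q := by
          calc C₂ ^ 3 = C₂ * C₂ * C₂ := by ring
            _ ≤ q * q * Q := mul_le_mul hqq hQ hC₂.le (by positivity)
            _ = q ^ 2 * Q := by ring
        have hc2 : C₂ ^ 2 ≤ q * Q := by
          calc C₂ ^ 2 = C₂ * C₂ := by ring
            _ ≤ q * Q := mul_le_mul hq hQ hC₂.le hq0.le
        have d1 : (4 * B ^ 2 + 2 * B) * n ^ 2 ≤ (4 * B ^ 2 + 2 * B) * n ^ 2 * (q ^ 2 * Q) / C₂ ^ 3 := by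
          rw [le_div_iff₀ (by positivity)]
          exact mul_le_mul_of_nonneg_left hc3 (by positivity)
        have d2 : n ^ 2 * q ≤ n ^ 2 * (q ^ 2 * Q) / C₂ ^ 2 := by
          rw [le_div_iff₀ (by positivity)]
          calc n ^ 2 * q * C₂ ^ 2 ≤ n ^ 2 * q * (q * Q) :=
                mul_le_mul_of_nonneg_left hc2 (by positivity)
            _ = n ^ 2 * (q ^ 2 * Q) := by ring
        have hid : C₁ * ((4 * B ^ 2 + 2 * B) / C₂ ^ 3 + 1 / C₂ ^ 2) * n ^ 2 * (q ^ 2 * Q)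
            = C₁ * ((4 * B ^ 2 + 2 * B) * n ^ 2 * (q ^ 2 * Q) / C₂ ^ 3 + n ^ 2 * (q ^ 2 * Q) / C₂ ^ 2) := by
          field_simp
        rw [hid]
        exact mul_le_mul_of_nonneg_left (add_le_add d1 d2) hC₁.le

section helpers

lemma intlow (C₃ : ℝ) (hC₃ : 0 ≤ C₃) (f : ℝ → ℝ) (hf : Continuous f) (hC : ∀ s, C₃ ≤ f s) :
    ∀ a b : ℝ, C₃ * |b - a| ≤ |∫ s in a..b, f s| := by
  have key : ∀ a b : ℝ, a ≤ b → C₃ * |b - a| ≤ |∫ s in a..b, f s| := by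
    intro a b hab
    have h1 : ∫ s in a..b, (C₃ : ℝ) ≤ ∫ s in a..b, f s :=
      integral_mono_on hab intervalIntegrable_const (hf.intervalIntegrable _ _) fun x _ => hC x
    rw [intervalIntegral.integral_const, smul_eq_mul] at h1
    have h0 : 0 ≤ (b - a) * C₃ := mul_nonneg (by linarith) hC₃
    rw [abs_of_nonneg (le_trans h0 h1), abs_of_nonneg (by linarith : (0:ℝ) ≤ b - a)]
    linarith
  intro a b
  rcases le_total a b with hab | hab
  · exact key a b hab
  · rw [abs_sub_comm, ← abs_neg (∫ s in a..b, f s), ← intervalIntegral.integral_symm]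
    exact key b a hab

end helpers


/-- The threshold functional `R(ρ;φ) = ∫_{-ρ}^{0} ( C₁/(C₂ + ‖φ(s)‖²) + C₃ ) ds` for
`φ ∈ C([-h,0];H)` and `ρ ∈ [0,h]` (the evaluation of `φ` is extended by clamping the
argument to `[-h,0]`; for `ρ ∈ [0,h]` the integration variable stays in `[-h,0]`). -/
noncomputable def Rthr {H : Type*} [NormedAddCommGroup H] (h C₁ C₂ C₃ : ℝ)
    (hh0 : -h ≤ (0 : ℝ)) (φ : C(Set.Icc (-h) (0 : ℝ), H)) (ρ : ℝ) : ℝ :=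
  ∫ s in (-ρ)..(0 : ℝ), (C₁ / (C₂ + ‖Set.IccExtend hh0 (⇑φ) s‖ ^ 2) + C₃)

set_option maxHeartbeats 4000000 in
set_option maxHeartbeats 1600000 in
/-- Assume `C₃ h > 1` and let `r : C([-h,0];H) → [0,h]` assign to each `φ`
the unique `ρ ∈ [0,h]` with `R(ρ;φ) = 1`.  Then `r` is Fréchet differentiable at every
`φ`, with derivative the continuous linear functional
`Dr(φ)ψ = (C₁/(C₂+‖φ(-r(φ))‖²) + C₃)⁻¹ ∫_{-r(φ)}^{0} 2C₁⟨φ(s),ψ(s)⟩/(C₂+‖φ(s)‖²)² ds`. -/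
theorem threshold_delay_frechet_differentiable {H : Type*} [NormedAddCommGroup H]
    [InnerProductSpace ℝ H] [CompleteSpace H]
    (h C₁ C₂ C₃ : ℝ) (hh : 0 < h) (hC₁ : 0 < C₁) (hC₂ : 0 < C₂) (hC₃ : 0 < C₃)
    (hth : 1 < C₃ * h)
    (r : C(Set.Icc (-h) (0 : ℝ), H) → ℝ)
    (hr : ∀ φ, r φ ∈ Set.Icc (0 : ℝ) h ∧ Rthr h C₁ C₂ C₃ (by linarith) φ (r φ) = 1) :
    ∀ φ : C(Set.Icc (-h) (0 : ℝ), H),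
      ∃ L : C(Set.Icc (-h) (0 : ℝ), H) →L[ℝ] ℝ, HasFDerivAt r L φ ∧
        ∀ ψ : C(Set.Icc (-h) (0 : ℝ), H),
          L ψ = (C₁ / (C₂ + ‖Set.IccExtend (show -h ≤ (0:ℝ) by linarith) (⇑φ) (-(r φ))‖ ^ 2)
                  + C₃)⁻¹ *
            ∫ s in (-(r φ))..(0 : ℝ),
              (2 * C₁ *
                  (inner ℝ (Set.IccExtend (show -h ≤ (0:ℝ) by linarith) (⇑φ) s)
                         (Set.IccExtend (show -h ≤ (0:ℝ) by linarith) (⇑ψ) s) : ℝ)) /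
                (C₂ + ‖Set.IccExtend (show -h ≤ (0:ℝ) by linarith) (⇑φ) s‖ ^ 2) ^ 2 := by
  intro φ
  have hh0 : -h ≤ (0:ℝ) := by linarith
  set K := C₁ / (C₂ * Real.sqrt C₂) with hK
  have hK0 : 0 < K := by
    rw [hK]; positivity
  set ext : C(Set.Icc (-h) (0:ℝ), H) → ℝ → H := fun χ => Set.IccExtend hh0 ⇑χ with hext
  have extcont : ∀ χ, Continuous (ext χ) := fun χ => χ.continuous.comp continuous_projIcc
  have extnorm : ∀ χ s, ‖ext χ s‖ ≤ ‖χ‖ := fun χ s => χ.norm_coe_le_norm _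
  have extadd : ∀ χ ψ s, ext (χ + ψ) s = ext χ s + ext ψ s := fun _ _ _ => rfl
  set g : H → ℝ := fun x => C₁ / (C₂ + ‖x‖ ^ 2) + C₃ with hg
  have hgcont : Continuous g := by
    rw [hg]
    apply Continuous.add _ continuous_const
    exact Continuous.div continuous_const (by continuity) (fun x => by positivity)
  have hgC₃ : ∀ x, C₃ ≤ g x := fun x => le_add_of_nonneg_left (by positivity)
  have hglip : ∀ x y : H, |g x - g y| ≤ K * ‖x - y‖ := by
    intro x y
    have h1 := glip C₁ C₂ hC₁ hC₂ x y
    have h2 : g x - g y = C₁ / (C₂ + ‖x‖ ^ 2) - C₁ / (C₂ + ‖y‖ ^ 2) := by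
      rw [hg]; ring
    rw [h2, hK]; exact h1
  have hfcont : ∀ χ, Continuous (fun s => g (ext χ s)) := fun χ => hgcont.comp (extcont χ)
  have hfint : ∀ χ (a b : ℝ), IntervalIntegrable (fun s => g (ext χ s)) volume a b :=
    fun χ a b => (hfcont χ).intervalIntegrable a b
  have hF : ∀ χ, ∫ s in (-(r χ))..(0:ℝ), g (ext χ s) = 1 := by
    intro χ
    have h1 := (hr χ).2
    simp only [Rthr] at h1
    exact h1
  have hr0 : ∀ χ, 0 ≤ r χ := fun χ => ((hr χ).1).1
  have hrh : ∀ χ, r χ ≤ h := fun χ => ((hr χ).1).2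
  have hFlip : ∀ (χ χ' : C(Set.Icc (-h) (0:ℝ), H)) (a b : ℝ), |b - a| ≤ h →
      |(∫ s in a..b, g (ext χ' s)) - ∫ s in a..b, g (ext χ s)| ≤ h * K * ‖χ' - χ‖ := by
    intro χ χ' a b hab
    rw [← intervalIntegral.integral_sub (hfint _ _ _) (hfint _ _ _)]
    have hb : ∀ s ∈ Set.uIoc a b, ‖g (ext χ' s) - g (ext χ s)‖ ≤ K * ‖χ' - χ‖ := by
      intro s _
      rw [Real.norm_eq_abs]
      calc |g (ext χ' s) - g (ext χ s)| ≤ K * ‖ext χ' s - ext χ s‖ := hglip _ _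
        _ = K * ‖ext (χ' - χ) s‖ := rfl
        _ ≤ K * ‖χ' - χ‖ := mul_le_mul_of_nonneg_left (extnorm _ _) hK0.le
    have h2 := intervalIntegral.norm_integral_le_of_norm_le_const hb
    rw [Real.norm_eq_abs] at h2
    calc |∫ s in a..b, (g (ext χ' s) - g (ext χ s))| ≤ K * ‖χ' - χ‖ * |b - a| := h2
      _ ≤ K * ‖χ' - χ‖ * h :=
          mul_le_mul_of_nonneg_left hab (mul_nonneg hK0.le (norm_nonneg (χ' - χ)))
      _ = h * K * ‖χ' - χ‖ := by ring
  set Λ := h * K / C₃ with hΛ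
  have hΛ0 : 0 < Λ := by rw [hΛ]; positivity
  have hrlip : ∀ χ χ', |r χ' - r χ| ≤ Λ * ‖χ' - χ‖ := by
    intro χ χ'
    have e1 : (∫ s in (-(r χ'))..(-(r χ)), g (ext χ' s))
        + ∫ s in (-(r χ))..(0:ℝ), g (ext χ' s) = 1 := by
      rw [intervalIntegral.integral_add_adjacent_intervals (hfint _ _ _) (hfint _ _ _)]
      exact hF χ'
    have lo := intlow C₃ hC₃.le _ (hfcont χ') (fun s => hgC₃ _) (-(r χ')) (-(r χ))
    have habs : |(0:ℝ) - -(r χ)| ≤ h := by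
      rw [zero_sub, neg_neg, abs_of_nonneg (hr0 χ)]; exact hrh χ
    have hi := hFlip χ' χ (-(r χ)) 0 habs
    have e2 : ∫ s in (-(r χ'))..(-(r χ)), g (ext χ' s)
        = (∫ s in (-(r χ))..(0:ℝ), g (ext χ s)) - ∫ s in (-(r χ))..(0:ℝ), g (ext χ' s) := by
      rw [hF χ]; linarith [e1]
    have e3 : |(-(r χ)) - -(r χ')| = |r χ' - r χ| := by
      rw [show (-(r χ)) - -(r χ') = r χ' - r χ from by ring]
    rw [e3, e2] at lo
    have e4 : C₃ * |r χ' - r χ| ≤ h * K * ‖χ - χ'‖ := le_trans lo hi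
    rw [hΛ, div_mul_eq_mul_div, le_div_iff₀ hC₃]
    rw [norm_sub_rev] at e4
    linarith
  -- the point and the derivative functional
  set ρ₀ := r φ with hρ₀
  set A := g (ext φ (-ρ₀)) with hA
  have hA0 : 0 < A := lt_of_lt_of_le hC₃ (hgC₃ _)
  have hAinv : A⁻¹ ≤ C₃⁻¹ := by
    apply inv_anti₀ hC₃ (hgC₃ _)
  set bb : C(Set.Icc (-h) (0:ℝ), H) → ℝ → ℝ :=
    fun ψ s => 2 * C₁ * (inner ℝ (ext φ s) (ext ψ s) : ℝ) / (C₂ + ‖ext φ s‖ ^ 2) ^ 2 with hbb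
  have hbbcont : ∀ ψ, Continuous (bb ψ) := by
    intro ψ
    rw [hbb]
    exact Continuous.div (continuous_const.mul ((extcont φ).inner (extcont ψ)))
      ((continuous_const.add (((extcont φ).norm).pow 2)).pow 2) (fun s => by positivity)
  have hbbint : ∀ ψ (a b : ℝ), IntervalIntegrable (bb ψ) volume a b :=
    fun ψ a b => (hbbcont ψ).intervalIntegrable a b
  have hbbbound : ∀ ψ s, |bb ψ s| ≤ 2 * C₁ * ‖φ‖ * ‖ψ‖ / C₂ ^ 2 := by
    intro ψ s
    rw [hbb]
    simp only []
    rw [abs_div]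
    apply div_le_div₀ (by positivity)
    · rw [abs_mul]
      rw [abs_of_pos (by positivity : (0:ℝ) < 2 * C₁)]
      calc 2 * C₁ * |(inner ℝ (ext φ s) (ext ψ s) : ℝ)| ≤ 2 * C₁ * (‖ext φ s‖ * ‖ext ψ s‖) :=
            mul_le_mul_of_nonneg_left (abs_real_inner_le_norm _ _) (by positivity)
        _ ≤ 2 * C₁ * (‖φ‖ * ‖ψ‖) := by
            apply mul_le_mul_of_nonneg_left _ (by positivity)
            exact mul_le_mul (extnorm φ s) (extnorm ψ s) (norm_nonneg _) (norm_nonneg _)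
        _ = 2 * C₁ * ‖φ‖ * ‖ψ‖ := by ring
    · positivity
    · rw [abs_of_pos (by positivity : (0:ℝ) < (C₂ + ‖ext φ s‖ ^ 2) ^ 2)]
      nlinarith [norm_nonneg (ext φ s), sq_nonneg (‖ext φ s‖ ^ 2), sq_nonneg ‖ext φ s‖,
        mul_nonneg hC₂.le (sq_nonneg ‖ext φ s‖)]
  set Blin : C(Set.Icc (-h) (0:ℝ), H) →ₗ[ℝ] ℝ :=
    { toFun := fun ψ => ∫ s in (-ρ₀)..(0:ℝ), bb ψ s
      map_add' := by
        intro ψ ψ'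
        rw [← intervalIntegral.integral_add (hbbint ψ _ _) (hbbint ψ' _ _)]
        apply intervalIntegral.integral_congr
        intro s _
        simp only [hbb]
        rw [extadd, inner_add_right]
        ring
      map_smul' := by
        intro cc ψ
        simp only [RingHom.id_apply]
        rw [← intervalIntegral.integral_smul]
        apply intervalIntegral.integral_congr
        intro s _
        simp only [hbb, smul_eq_mul]
        rw [show ext (cc • ψ) s = cc • ext ψ s from rfl, real_inner_smul_right]
        ring } with hBlin
  have hBapp : ∀ ψ, Blin ψ = ∫ s in (-ρ₀)..(0:ℝ), bb ψ s := fun _ => rfl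
  have hBbound : ∀ ψ, ‖Blin ψ‖ ≤ h * (2 * C₁ * ‖φ‖ / C₂ ^ 2) * ‖ψ‖ := by
    intro ψ
    have hb : ∀ s ∈ Set.uIoc (-ρ₀) (0:ℝ), ‖bb ψ s‖ ≤ 2 * C₁ * ‖φ‖ * ‖ψ‖ / C₂ ^ 2 := by
      intro s _
      rw [Real.norm_eq_abs]; exact hbbbound ψ s
    have h2 := intervalIntegral.norm_integral_le_of_norm_le_const hb
    have e1 : |(0:ℝ) - -ρ₀| = ρ₀ := by
      rw [zero_sub, neg_neg, abs_of_nonneg (hr0 φ)]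
    calc ‖Blin ψ‖ = ‖∫ s in (-ρ₀)..(0:ℝ), bb ψ s‖ := rfl
      _ ≤ 2 * C₁ * ‖φ‖ * ‖ψ‖ / C₂ ^ 2 * |0 - -ρ₀| := h2
      _ = 2 * C₁ * ‖φ‖ * ‖ψ‖ / C₂ ^ 2 * ρ₀ := by rw [e1]
      _ ≤ 2 * C₁ * ‖φ‖ * ‖ψ‖ / C₂ ^ 2 * h := by
          have hρh : ρ₀ ≤ h := hrh φ
          exact mul_le_mul_of_nonneg_left hρh (by positivity)
      _ = h * (2 * C₁ * ‖φ‖ / C₂ ^ 2) * ‖ψ‖ := by ring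
  set L : C(Set.Icc (-h) (0:ℝ), H) →L[ℝ] ℝ :=
    A⁻¹ • (Blin.mkContinuous (h * (2 * C₁ * ‖φ‖ / C₂ ^ 2)) hBbound) with hL
  refine ⟨L, ?_, ?_⟩
  · -- the Fréchet derivative estimate
    rw [hasFDerivAt_iff_isLittleO_nhds_zero, Asymptotics.isLittleO_iff]
    intro c hc
    have hB₀0 : (0:ℝ) ≤ ‖φ‖ := norm_nonneg φ
    set B₀ := ‖φ‖ with hB₀
    set M := C₁ * ((4 * B₀ ^ 2 + 2 * B₀) / C₂ ^ 3 + 1 / C₂ ^ 2) with hM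
    have hM0 : 0 < M := by
      rw [hM]
      apply mul_pos hC₁
      apply add_pos_of_nonneg_of_pos
      · apply div_nonneg (by linarith [sq_nonneg B₀]) (by positivity)
      · positivity
    set ε := c * C₃ / (2 * (Λ + 1)) with hε
    have hε0 : 0 < ε := by rw [hε]; positivity
    obtain ⟨δ₁, hδ₁0, hδ₁⟩ :=
      Metric.continuousAt_iff.1 ((hfcont φ).continuousAt (x := -ρ₀)) ε hε0
    set δ := min (min 1 (δ₁ / (Λ + 1))) (c * C₃ / (2 * (h * M + Λ * K) + 1)) with hδ
    have hδ0 : 0 < δ := by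
      apply lt_min (lt_min one_pos (by positivity))
      have : (0:ℝ) < 2 * (h * M + Λ * K) + 1 := by positivity
      positivity
    rw [Metric.eventually_nhds_iff]
    refine ⟨δ, hδ0, ?_⟩
    intro ψ hψ'
    rw [dist_zero_right] at hψ'
    -- basic smallness facts
    have hδle1 : δ ≤ 1 := le_trans (min_le_left _ _) (min_le_left _ _)
    have hψ1 : ‖ψ‖ ≤ 1 := le_trans hψ'.le hδle1
    have hψδ₁ : ‖ψ‖ < δ₁ / (Λ + 1) :=
      lt_of_lt_of_le hψ' (le_trans (min_le_left _ _) (min_le_right _ _))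
    have hψδ₃ : ‖ψ‖ ≤ c * C₃ / (2 * (h * M + Λ * K) + 1) :=
      le_trans hψ'.le (min_le_right _ _)
    set ρ' := r (φ + ψ) with hρ'
    have hrl : |ρ' - ρ₀| ≤ Λ * ‖ψ‖ := by
      have := hrlip φ (φ + ψ)
      simpa using this
    have hrlδ : |ρ' - ρ₀| < δ₁ := by
      have h1 : ‖ψ‖ * (Λ + 1) < δ₁ := by
        rw [← lt_div_iff₀ (by positivity : (0:ℝ) < Λ + 1)]
        exact hψδ₁
      have h2 : Λ * ‖ψ‖ < δ₁ := by linarith [h1, norm_nonneg ψ]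
      exact lt_of_le_of_lt hrl h2
    -- notation for the two integrands
    set f1 : ℝ → ℝ := fun s => g (ext (φ + ψ) s) with hf1
    set f0 : ℝ → ℝ := fun s => g (ext φ s) with hf0
    have hint1 : ∀ a b : ℝ, IntervalIntegrable f1 volume a b := hfint (φ + ψ)
    have hint0 : ∀ a b : ℝ, IntervalIntegrable f0 volume a b := hfint φ
    have key1 : (∫ s in (-ρ')..(-ρ₀), f1 s) + ∫ s in (-ρ₀)..(0:ℝ), f1 s = 1 := by
      rw [intervalIntegral.integral_add_adjacent_intervals (hint1 _ _) (hint1 _ _)]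
      exact hF (φ + ψ)
    have key0 : ∫ s in (-ρ₀)..(0:ℝ), f0 s = 1 := hF φ
    set T1 := ∫ s in (-ρ')..(-ρ₀), f1 s with hT1
    set T2 := (∫ s in (-ρ₀)..(0:ℝ), f1 s) - ∫ s in (-ρ₀)..(0:ℝ), f0 s with hT2
    have hsum : T1 + T2 = 0 := by rw [hT1, hT2]; linarith [key1, key0]
    set Bψ := ∫ s in (-ρ₀)..(0:ℝ), bb ψ s with hBψ
    -- R₂ bound
    have hR2 : |T2 + Bψ| ≤ h * M * ‖ψ‖ ^ 2 := by
      have heq : T2 + Bψ = ∫ s in (-ρ₀)..(0:ℝ), (f1 s - f0 s + bb ψ s) := by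
        rw [hT2, hBψ, intervalIntegral.integral_add ((hint1 _ _).sub (hint0 _ _)) (hbbint ψ _ _),
          intervalIntegral.integral_sub (hint1 _ _) (hint0 _ _)]
      rw [heq]
      have hpt : ∀ s ∈ Set.uIoc (-ρ₀) (0:ℝ), ‖f1 s - f0 s + bb ψ s‖ ≤ M * ‖ψ‖ ^ 2 := by
        intro s _
        rw [Real.norm_eq_abs]
        have hq := gquad C₁ C₂ B₀ hC₁ hC₂ (ext φ s) (ext ψ s) (extnorm φ s)
          (le_trans (extnorm ψ s) hψ1)
        have e : f1 s - f0 s + bb ψ s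
            = C₁ / (C₂ + ‖ext φ s + ext ψ s‖ ^ 2) - C₁ / (C₂ + ‖ext φ s‖ ^ 2)
              + 2 * C₁ * (inner ℝ (ext φ s) (ext ψ s) : ℝ) / (C₂ + ‖ext φ s‖ ^ 2) ^ 2 := by
          rw [hf1, hf0, hbb]
          simp only
          rw [extadd]
          ring
        rw [e]
        calc |C₁ / (C₂ + ‖ext φ s + ext ψ s‖ ^ 2) - C₁ / (C₂ + ‖ext φ s‖ ^ 2)
              + 2 * C₁ * (inner ℝ (ext φ s) (ext ψ s) : ℝ) / (C₂ + ‖ext φ s‖ ^ 2) ^ 2|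
            ≤ C₁ * ((4 * B₀ ^ 2 + 2 * B₀) / C₂ ^ 3 + 1 / C₂ ^ 2) * ‖ext ψ s‖ ^ 2 := hq
          _ = M * ‖ext ψ s‖ ^ 2 := by rw [hM]
          _ ≤ M * ‖ψ‖ ^ 2 := by
              apply mul_le_mul_of_nonneg_left _ hM0.le
              exact pow_le_pow_left₀ (norm_nonneg _) (extnorm ψ s) 2
      have h2 := intervalIntegral.norm_integral_le_of_norm_le_const hpt
      rw [Real.norm_eq_abs] at h2
      have e1 : |(0:ℝ) - -ρ₀| = ρ₀ := by rw [zero_sub, neg_neg, abs_of_nonneg (hr0 φ)]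
      calc |∫ s in (-ρ₀)..(0:ℝ), (f1 s - f0 s + bb ψ s)| ≤ M * ‖ψ‖ ^ 2 * |0 - -ρ₀| := h2
        _ = M * ‖ψ‖ ^ 2 * ρ₀ := by rw [e1]
        _ ≤ M * ‖ψ‖ ^ 2 * h := mul_le_mul_of_nonneg_left (hrh φ) (by positivity)
        _ = h * M * ‖ψ‖ ^ 2 := by ring
    -- R₁ bound
    have hR1 : |T1 - A * (ρ' - ρ₀)| ≤ (K * ‖ψ‖ + ε) * (Λ * ‖ψ‖) := by
      have heq : T1 - A * (ρ' - ρ₀) = ∫ s in (-ρ')..(-ρ₀), (f1 s - A) := by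
        rw [intervalIntegral.integral_sub (hint1 _ _) intervalIntegrable_const,
          intervalIntegral.integral_const, smul_eq_mul, hT1]
        ring
      rw [heq]
      have hpt : ∀ s ∈ Set.uIoc (-ρ') (-ρ₀), ‖f1 s - A‖ ≤ K * ‖ψ‖ + ε := by
        intro s hs
        have l1 := neg_abs_le (ρ' - ρ₀)
        have l2 := le_abs_self (ρ' - ρ₀)
        have hd : |s - -ρ₀| ≤ |ρ' - ρ₀| := by
          rw [abs_le]
          rcases Set.mem_uIoc.1 hs with ⟨h1, h2⟩ | ⟨h1, h2⟩ <;>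
            constructor <;> linarith [abs_nonneg (ρ' - ρ₀)]
        have hd2 : dist s (-ρ₀) < δ₁ := by
          rw [Real.dist_eq]; exact lt_of_le_of_lt hd hrlδ
        have hc1 := hδ₁ hd2
        rw [Real.dist_eq] at hc1
        have hl : |f1 s - f0 s| ≤ K * ‖ψ‖ := by
          calc |f1 s - f0 s| ≤ K * ‖ext (φ + ψ) s - ext φ s‖ := hglip _ _
            _ = K * ‖ext ψ s‖ := by rw [extadd]; simp
            _ ≤ K * ‖ψ‖ := mul_le_mul_of_nonneg_left (extnorm ψ s) hK0.le
        rw [Real.norm_eq_abs]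
        calc |f1 s - A| ≤ |f1 s - f0 s| + |f0 s - A| := abs_sub_le _ _ _
          _ ≤ K * ‖ψ‖ + ε := add_le_add hl hc1.le
      have h2 := intervalIntegral.norm_integral_le_of_norm_le_const hpt
      rw [Real.norm_eq_abs] at h2
      calc |∫ s in (-ρ')..(-ρ₀), (f1 s - A)| ≤ (K * ‖ψ‖ + ε) * |(-ρ₀) - -ρ'| := h2
        _ = (K * ‖ψ‖ + ε) * |ρ' - ρ₀| := by
            rw [show (-ρ₀) - -ρ' = ρ' - ρ₀ from by ring]
        _ ≤ (K * ‖ψ‖ + ε) * (Λ * ‖ψ‖) := by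
            apply mul_le_mul_of_nonneg_left hrl
            have : (0:ℝ) ≤ K * ‖ψ‖ := by positivity
            linarith [hε0]
    -- assemble
    have hAA : A⁻¹ * A = 1 := inv_mul_cancel₀ hA0.ne'
    have hAe : ρ' - ρ₀ - A⁻¹ * Bψ = -(A⁻¹ * ((T1 - A * (ρ' - ρ₀)) + (T2 + Bψ))) := by
      linear_combination A⁻¹ * hsum - (ρ' - ρ₀) * hAA
    have habs : |ρ' - ρ₀ - A⁻¹ * Bψ|
        ≤ C₃⁻¹ * ((K * ‖ψ‖ + ε) * (Λ * ‖ψ‖) + h * M * ‖ψ‖ ^ 2) := by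
      rw [hAe, abs_neg, abs_mul, abs_of_pos (inv_pos.2 hA0)]
      have h1 : |(T1 - A * (ρ' - ρ₀)) + (T2 + Bψ)|
          ≤ (K * ‖ψ‖ + ε) * (Λ * ‖ψ‖) + h * M * ‖ψ‖ ^ 2 :=
        le_trans (abs_add_le _ _) (add_le_add hR1 hR2)
      calc A⁻¹ * |(T1 - A * (ρ' - ρ₀)) + (T2 + Bψ)|
          ≤ C₃⁻¹ * |(T1 - A * (ρ' - ρ₀)) + (T2 + Bψ)| :=
            mul_le_mul_of_nonneg_right hAinv (abs_nonneg _)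
        _ ≤ C₃⁻¹ * ((K * ‖ψ‖ + ε) * (Λ * ‖ψ‖) + h * M * ‖ψ‖ ^ 2) :=
            mul_le_mul_of_nonneg_left h1 (inv_nonneg.2 hC₃.le)
    -- final arithmetic
    have hLψ : L ψ = A⁻¹ * Bψ := by
      rw [hL, ContinuousLinearMap.smul_apply, smul_eq_mul, LinearMap.mkContinuous_apply, hBapp]
    have s1 : C₃⁻¹ * (Λ * ε) ≤ c / 2 := by
      have e : C₃⁻¹ * (Λ * ε) = c * Λ / (2 * (Λ + 1)) := by
        rw [hε]; field_simp
      rw [e, div_le_div_iff₀ (by positivity) (by norm_num : (0:ℝ) < 2)]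
      linarith [mul_nonneg hc.le hΛ0.le, hc.le]
    have s2 : C₃⁻¹ * ((Λ * K + h * M) * ‖ψ‖) ≤ c / 2 := by
      have hD0 : (0:ℝ) < h * M + Λ * K := by positivity
      have e : C₃⁻¹ * ((Λ * K + h * M) * (c * C₃ / (2 * (h * M + Λ * K) + 1)))
          = c * (h * M + Λ * K) / (2 * (h * M + Λ * K) + 1) := by
        field_simp; ring
      calc C₃⁻¹ * ((Λ * K + h * M) * ‖ψ‖)
          ≤ C₃⁻¹ * ((Λ * K + h * M) * (c * C₃ / (2 * (h * M + Λ * K) + 1))) := by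
            apply mul_le_mul_of_nonneg_left _ (inv_nonneg.2 hC₃.le)
            exact mul_le_mul_of_nonneg_left hψδ₃ (by positivity)
        _ = c * (h * M + Λ * K) / (2 * (h * M + Λ * K) + 1) := e
        _ ≤ c / 2 := by
            rw [div_le_div_iff₀ (by positivity) (by norm_num : (0:ℝ) < 2)]
            linarith [mul_nonneg hc.le hD0.le, hc.le]
    have expand : C₃⁻¹ * ((K * ‖ψ‖ + ε) * (Λ * ‖ψ‖) + h * M * ‖ψ‖ ^ 2)
        = (C₃⁻¹ * ((Λ * K + h * M) * ‖ψ‖)) * ‖ψ‖ + (C₃⁻¹ * (Λ * ε)) * ‖ψ‖ := by ring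
    have hfin : C₃⁻¹ * ((K * ‖ψ‖ + ε) * (Λ * ‖ψ‖) + h * M * ‖ψ‖ ^ 2) ≤ c * ‖ψ‖ := by
      rw [expand]
      have t1 := mul_le_mul_of_nonneg_right s2 (norm_nonneg ψ)
      have t2 := mul_le_mul_of_nonneg_right s1 (norm_nonneg ψ)
      linarith
    calc ‖r (φ + ψ) - r φ - L ψ‖ = |ρ' - ρ₀ - A⁻¹ * Bψ| := by
          rw [Real.norm_eq_abs, hLψ, hρ', hρ₀]
      _ ≤ C₃⁻¹ * ((K * ‖ψ‖ + ε) * (Λ * ‖ψ‖) + h * M * ‖ψ‖ ^ 2) := habs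
      _ ≤ c * ‖ψ‖ := hfin
  · intro ψ
    rw [hL, ContinuousLinearMap.smul_apply, smul_eq_mul,
      LinearMap.mkContinuous_apply, hBapp]
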